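/- arXiv:2003.04044 — 7 statements merged into one kernel-verified Lean document; each statement's English description precedes it below -/
import Mathlib

section
/- For every natural number k ≥ 1 and real t > 0, c > 0, the integral ∫₀^{ct} (c²t² − β²)^{k−1}(ct − β) dβ equals ((ct)^{2k}/2)·(Γ(k)Γ(1/2)/Γ(k+1/2) − 1/k). -/
open Real

lemma aux_J (k : ℕ) (hk : 1 ≤ k) :
    ∫ x in (0:ℝ)..1, (1 - x ^ 2) ^ (k - 1) =
      Real.Gamma k * Real.Gamma (1 / 2) / (2 * Real.Gamma (k + 1 / 2)) := by
  induction k, hk using Nat.le_induction with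
  | base =>
    have h12 : (0:ℝ) < Real.Gamma (1/2) := Real.Gamma_pos_of_pos (by norm_num)
    have h32 : Real.Gamma ((1:ℝ)/2 + 1) = (1/2) * Real.Gamma (1/2) :=
      Real.Gamma_add_one (by norm_num)
    simp only [Nat.cast_one, Real.Gamma_one]
    norm_num
    rw [show (3:ℝ)/2 = 1/2 + 1 by norm_num, h32]
    field_simp
  | succ k hk ih =>
    obtain ⟨n, rfl⟩ : ∃ n, k = n + 1 := ⟨k - 1, (Nat.succ_pred_eq_of_pos hk).symm⟩
    have key : ∫ x in (0:ℝ)..1,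
        ((2 * ((n:ℝ)+1) + 1) * (1 - x ^ 2) ^ (n+1) - 2 * ((n:ℝ)+1) * (1 - x ^ 2) ^ n) = 0 := by
      have hder : ∀ x ∈ Set.uIcc (0:ℝ) 1, HasDerivAt (fun x : ℝ => x * (1 - x ^ 2) ^ (n+1))
          ((2 * ((n:ℝ)+1) + 1) * (1 - x ^ 2) ^ (n+1) - 2 * ((n:ℝ)+1) * (1 - x ^ 2) ^ n) x := by
        intro x _
        have h2 : HasDerivAt (fun x : ℝ => 1 - x ^ 2) (-(2 * x)) x := by
          simpa using (hasDerivAt_pow 2 x).const_sub 1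
        have h1 : HasDerivAt (fun x : ℝ => (1 - x ^ 2) ^ (n+1))
            (((n:ℝ)+1) * (1 - x ^ 2) ^ n * (-(2 * x))) x := by
          have := h2.fun_pow (n+1)
          simpa using this
        have : HasDerivAt (fun x : ℝ => x * (1 - x ^ 2) ^ (n+1)) _ x := (hasDerivAt_id x).fun_mul h1
        convert this using 1
        have hpow : (1 - x ^ 2) ^ (n+1) = (1 - x ^ 2) ^ n * (1 - x ^ 2) := pow_succ _ _
        rw [hpow]; simp only [id_eq]; ring
      rw [intervalIntegral.integral_eq_sub_of_hasDerivAt hder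
        (by apply Continuous.intervalIntegrable; continuity)]
      norm_num
    have hi1 : IntervalIntegrable (fun x : ℝ => (1 - x ^ 2) ^ (n+1)) MeasureTheory.volume 0 1 := by
      apply Continuous.intervalIntegrable; continuity
    have hi2 : IntervalIntegrable (fun x : ℝ => (1 - x ^ 2) ^ n) MeasureTheory.volume 0 1 := by
      apply Continuous.intervalIntegrable; continuity
    rw [intervalIntegral.integral_sub (hi1.const_mul _) (hi2.const_mul _),
      intervalIntegral.integral_const_mul, intervalIntegral.integral_const_mul,
      sub_eq_zero] at key
    simp only [Nat.add_sub_cancel] at ih ⊢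
    have hG : (0:ℝ) < Real.Gamma ((n:ℝ) + 1 + 1/2) := Real.Gamma_pos_of_pos (by positivity)
    have hg1 : Real.Gamma ((n:ℝ) + 1 + 1) = ((n:ℝ)+1) * Real.Gamma ((n:ℝ)+1) :=
      Real.Gamma_add_one (by positivity)
    have hg2 : Real.Gamma ((n:ℝ) + 1 + 1 + 1/2) = ((n:ℝ)+1+1/2) * Real.Gamma ((n:ℝ)+1+1/2) := by
      rw [show (n:ℝ)+1+1+1/2 = ((n:ℝ)+1+1/2)+1 by ring, Real.Gamma_add_one (by positivity)]
    have h2n : (0:ℝ) < 2 * ((n:ℝ)+1) + 1 := by positivity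
    have hJ : ∫ x in (0:ℝ)..1, (1 - x ^ 2) ^ (n+1) =
        (2 * ((n:ℝ)+1)) / (2 * ((n:ℝ)+1) + 1) * ∫ x in (0:ℝ)..1, (1 - x ^ 2) ^ n := by
      field_simp
      linarith [key]
    push_cast at ih
    push_cast
    rw [hg1, hg2, hJ, ih]
    field_simp
theorem stmt_0 (k : ℕ) (hk : 1 ≤ k) (c t : ℝ) (ht : 0 < t) (hc : 0 < c) :
    ∫ β in (0:ℝ)..(c * t), (c ^ 2 * t ^ 2 - β ^ 2) ^ (k - 1) * (c * t - β) =
      (c * t) ^ (2 * k) / 2 *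
        (Real.Gamma k * Real.Gamma (1 / 2) / Real.Gamma (k + 1 / 2) - 1 / k) := by
  obtain ⟨n, rfl⟩ : ∃ n, k = n + 1 := ⟨k - 1, (Nat.succ_pred_eq_of_pos hk).symm⟩
  set a := c * t with ha'
  have ha : 0 < a := by positivity
  have hca : c ^ 2 * t ^ 2 = a ^ 2 := by rw [ha']; ring
  simp only [Nat.add_sub_cancel]
  have hi1 : IntervalIntegrable (fun β : ℝ => a * (a ^ 2 - β ^ 2) ^ n)
      MeasureTheory.volume 0 a := by apply Continuous.intervalIntegrable; continuity
  have hi2 : IntervalIntegrable (fun β : ℝ => β * (a ^ 2 - β ^ 2) ^ n)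
      MeasureTheory.volume 0 a := by apply Continuous.intervalIntegrable; continuity
  have hsplit : ∫ β in (0:ℝ)..a, (c ^ 2 * t ^ 2 - β ^ 2) ^ n * (a - β) =
      (∫ β in (0:ℝ)..a, a * (a ^ 2 - β ^ 2) ^ n) -
        ∫ β in (0:ℝ)..a, β * (a ^ 2 - β ^ 2) ^ n := by
    rw [← intervalIntegral.integral_sub hi1 hi2]
    apply intervalIntegral.integral_congr
    intro β _
    simp only [hca]
    ring
  have hscale : ∫ β in (0:ℝ)..a, (a ^ 2 - β ^ 2) ^ n =
      a * ((a ^ 2) ^ n * ∫ x in (0:ℝ)..1, (1 - x ^ 2) ^ n) := by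
    have h0 := intervalIntegral.smul_integral_comp_mul_left
      (fun β : ℝ => (a ^ 2 - β ^ 2) ^ n) a (a := 0) (b := 1)
    simp only [mul_zero, mul_one] at h0
    rw [← h0]
    have hcg : ∀ x : ℝ, (a ^ 2 - (a * x) ^ 2) ^ n = (a ^ 2) ^ n * (1 - x ^ 2) ^ n := by
      intro x
      rw [← mul_pow]
      ring_nf
    simp only [smul_eq_mul]
    rw [intervalIntegral.integral_congr (g := fun x : ℝ => (a ^ 2) ^ n * (1 - x ^ 2) ^ n)
      (fun x _ => hcg x), intervalIntegral.integral_const_mul]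
  have hbeta : ∫ β in (0:ℝ)..a, β * (a ^ 2 - β ^ 2) ^ n =
      (a ^ 2) ^ (n + 1) / (2 * ((n:ℝ) + 1)) := by
    have hder : ∀ β ∈ Set.uIcc (0:ℝ) a,
        HasDerivAt (fun β : ℝ => -((a ^ 2 - β ^ 2) ^ (n + 1)) / (2 * ((n:ℝ) + 1)))
          (β * (a ^ 2 - β ^ 2) ^ n) β := by
      intro β _
      have h2 : HasDerivAt (fun β : ℝ => a ^ 2 - β ^ 2) (-(2 * β)) β := by
        simpa using (hasDerivAt_pow 2 β).const_sub (a ^ 2)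
      have h1 : HasDerivAt (fun β : ℝ => -((a ^ 2 - β ^ 2) ^ (n + 1)) / (2 * ((n:ℝ) + 1))) _ β :=
        ((h2.fun_pow (n + 1)).fun_neg).div_const (2 * ((n:ℝ) + 1))
      convert h1 using 1
      have hne : 2 * ((n:ℝ) + 1) ≠ 0 := by positivity
      push_cast
      field_simp
    rw [intervalIntegral.integral_eq_sub_of_hasDerivAt hder
      (by apply Continuous.intervalIntegrable; continuity)]
    rw [sub_self, zero_pow (Nat.succ_ne_zero n)]
    ring
  have hJ := aux_J (n + 1) (by omega)
  simp only [Nat.add_sub_cancel] at hJ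
  rw [hsplit, intervalIntegral.integral_const_mul, hscale, hbeta, hJ]
  have hG : (0 : ℝ) < Real.Gamma (((n:ℕ):ℝ) + 1 + 1 / 2) := Real.Gamma_pos_of_pos (by positivity)
  have hn1 : (((n:ℕ):ℝ) + 1) ≠ 0 := by positivity
  push_cast
  push_cast at hJ hG hn1
  field_simp
  ring
end

section
/- For every natural number k ≥ 1 and reals c, t with ct > 0, one has (2·(2k)!/(k!(k−1)!))·∫₀^{ct} (c²t² − β²)^{k−1}(ct−β)/(2ct)^{2k} dβ = 1 − C(2k,k)/2^{2k}, where C(2k,k) is the central binomial coefficient. -/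
open intervalIntegral

lemma recA (n : ℕ) (a : ℝ) :
    (2*(n:ℝ)+3) * ∫ x in (0:ℝ)..a, (a^2-x^2)^(n+1)
      = (2*(n:ℝ)+2)*a^2 * ∫ x in (0:ℝ)..a, (a^2-x^2)^n := by
  have hd : ∀ x : ℝ, HasDerivAt (fun x : ℝ => x*(a^2-x^2)^(n+1))
      ((2*(n:ℝ)+3)*(a^2-x^2)^(n+1) - ((2*(n:ℝ)+2)*a^2)*(a^2-x^2)^n) x := by
    intro x
    have h1 : HasDerivAt (fun x : ℝ => a^2 - x^2) (-(2*x)) x := by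
      simpa using (hasDerivAt_pow 2 x).const_sub (a^2)
    have h3 := (hasDerivAt_id x).mul (h1.pow (n+1))
    refine h3.congr_deriv ?_
    push_cast
    simp only [id_eq, Pi.pow_apply]
    ring
  have hcont : Continuous fun x : ℝ =>
      (2*(n:ℝ)+3)*(a^2-x^2)^(n+1) - ((2*(n:ℝ)+2)*a^2)*(a^2-x^2)^n := by fun_prop
  have h0 := intervalIntegral.integral_eq_sub_of_hasDerivAt
    (f := fun x : ℝ => x*(a^2-x^2)^(n+1)) (a := (0:ℝ)) (b := a)
    (fun x _ => hd x) (hcont.intervalIntegrable _ _)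
  simp only [sub_self, zero_pow, Nat.succ_ne_zero, ne_eq, not_false_iff, mul_zero, zero_mul,
    sub_zero] at h0
  rw [intervalIntegral.integral_sub ((by fun_prop : Continuous fun x : ℝ =>
        (2*(n:ℝ)+3)*(a^2-x^2)^(n+1)).intervalIntegrable _ _)
      ((by fun_prop : Continuous fun x : ℝ =>
        ((2*(n:ℝ)+2)*a^2)*(a^2-x^2)^n).intervalIntegrable _ _),
    intervalIntegral.integral_const_mul, intervalIntegral.integral_const_mul] at h0
  linarith [h0]

lemma lemJ (n : ℕ) (a : ℝ) :
    ∫ x in (0:ℝ)..a, (a^2-x^2)^n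
      = 4^n * ((Nat.factorial n : ℝ))^2 * a^(2*n+1) / (Nat.factorial (2*n+1)) := by
  induction n with
  | zero => simp
  | succ n ih =>
    have hA := recA n a
    rw [ih] at hA
    have h3 : (2*(n:ℝ)+3) ≠ 0 := by positivity
    have hf1 : (Nat.factorial (2*(n+1)+1) : ℝ)
        = (2*(n:ℝ)+3) * (2*(n:ℝ)+2) * (Nat.factorial (2*n+1)) := by
      have : 2*(n+1)+1 = (2*n+1) + 1 + 1 := by ring
      rw [this, Nat.factorial_succ, Nat.factorial_succ]
      push_cast
      ring
    have hf2 : (Nat.factorial (n+1) : ℝ) = ((n:ℝ)+1) * (Nat.factorial n) := by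
      rw [Nat.factorial_succ]; push_cast; ring
    have hfn : (Nat.factorial (2*n+1) : ℝ) ≠ 0 := by
      exact_mod_cast Nat.factorial_ne_zero _
    have hJ : (∫ x in (0:ℝ)..a, (a^2-x^2)^(n+1))
        = (2*(n:ℝ)+2)*a^2 * (4^n*((Nat.factorial n:ℝ))^2*a^(2*n+1)/((Nat.factorial (2*n+1)):ℝ))
          / (2*(n:ℝ)+3) := by
      rw [eq_div_iff h3]; linarith [hA]
    rw [hJ, hf1, hf2]
    field_simp
    ring

lemma lemB (n : ℕ) (a : ℝ) :
    ∫ x in (0:ℝ)..a, (a^2-x^2)^n * x = a^(2*n+2)/(2*(n:ℝ)+2) := by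
  have hd : ∀ x : ℝ, HasDerivAt (fun x : ℝ => -(a^2-x^2)^(n+1)/(2*(n:ℝ)+2))
      ((a^2-x^2)^n * x) x := by
    intro x
    have h1 : HasDerivAt (fun x : ℝ => a^2 - x^2) (-(2*x)) x := by
      simpa using (hasDerivAt_pow 2 x).const_sub (a^2)
    have h2 := ((h1.pow (n+1)).neg).div_const (2*(n:ℝ)+2)
    refine h2.congr_deriv ?_
    have h3 : (2*(n:ℝ)+2) ≠ 0 := by positivity
    push_cast
    field_simp
  have hcont : Continuous fun x : ℝ => (a^2-x^2)^n * x := by fun_prop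
  have h0 := intervalIntegral.integral_eq_sub_of_hasDerivAt
    (a := (0:ℝ)) (b := a) (fun x _ => hd x) (hcont.intervalIntegrable _ _)
  rw [h0]
  have h3 : (2*(n:ℝ)+2) ≠ 0 := by positivity
  rw [sub_self, zero_pow (Nat.succ_ne_zero n)]
  field_simp
  ring

theorem stmt_2 (k : ℕ) (hk : 1 ≤ k) (c t : ℝ) (h : 0 < c * t) :
    2 * (Nat.factorial (2 * k) : ℝ) / ((Nat.factorial k : ℝ) * (Nat.factorial (k - 1) : ℝ)) *
      ∫ β in (0:ℝ)..(c * t),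
        (c ^ 2 * t ^ 2 - β ^ 2) ^ (k - 1) * (c * t - β) / (2 * c * t) ^ (2 * k) =
      1 - (Nat.choose (2 * k) k : ℝ) / 2 ^ (2 * k) := by
  obtain ⟨m, rfl⟩ : ∃ m, k = m + 1 := ⟨k-1, (Nat.succ_pred_eq_of_pos hk).symm⟩
  set a : ℝ := c * t with ha
  have ha0 : a ≠ 0 := ne_of_gt h
  have hrw : ∀ β : ℝ, (c ^ 2 * t ^ 2 - β ^ 2) ^ (m+1 - 1) * (c * t - β) / (2 * c * t) ^ (2 * (m+1))
      = (1/(2*a)^(2*(m+1))) * ((a^2-β^2)^m * a - (a^2-β^2)^m * β) := by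
    intro β
    have : c ^ 2 * t ^ 2 = a^2 := by rw [ha]; ring
    rw [this]
    simp only [Nat.add_sub_cancel]
    rw [ha]
    ring
  rw [intervalIntegral.integral_congr (g := fun β =>
      (1/(2*a)^(2*(m+1))) * ((a^2-β^2)^m * a - (a^2-β^2)^m * β)) (fun β _ => hrw β)]
  rw [intervalIntegral.integral_const_mul,
    intervalIntegral.integral_sub ((by fun_prop : Continuous fun x : ℝ =>
        (a^2-x^2)^m * a).intervalIntegrable _ _)
      ((by fun_prop : Continuous fun x : ℝ => (a^2-x^2)^m * x).intervalIntegrable _ _),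
    intervalIntegral.integral_mul_const, lemJ, lemB]
  simp only [Nat.add_sub_cancel]
  -- arithmetic part
  have hch : ((2*(m+1)).choose (m+1) : ℝ) * (Nat.factorial (m+1)) * (Nat.factorial (m+1))
      = (Nat.factorial (2*(m+1)) : ℝ) := by
    have h1 : 2*(m+1) - (m+1) = m+1 := by omega
    have := Nat.choose_mul_factorial_mul_factorial (show m+1 ≤ 2*(m+1) by omega)
    rw [h1] at this
    exact_mod_cast this
  have hfs : (Nat.factorial (2*(m+1)) : ℝ) = (2*(m:ℝ)+2) * (Nat.factorial (2*m+1)) := by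
    have : 2*(m+1) = (2*m+1) + 1 := by ring
    rw [this, Nat.factorial_succ]; push_cast; ring
  have hk1 : (Nat.factorial (m+1) : ℝ) = ((m:ℝ)+1) * (Nat.factorial m) := by
    rw [Nat.factorial_succ]; push_cast; ring
  have hfm : (Nat.factorial m : ℝ) ≠ 0 := by exact_mod_cast Nat.factorial_ne_zero _
  have hfm1 : (Nat.factorial (2*m+1) : ℝ) ≠ 0 := by exact_mod_cast Nat.factorial_ne_zero _
  have h2a : (2*a) ≠ 0 := by positivity
  have hm2 : (2*(m:ℝ)+2) ≠ 0 := by positivity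
  rw [hfs, hk1]
  have key : ((2*(m+1)).choose (m+1) : ℝ) = (2*(m:ℝ)+2) * (Nat.factorial (2*m+1))
      / ( (((m:ℝ)+1) * (Nat.factorial m)) * (((m:ℝ)+1) * (Nat.factorial m)) ) := by
    rw [eq_div_iff (by positivity)]
    rw [← hk1]
    nlinarith [hch, hfs]
  rw [key]
  have hpow : (2*a)^(2*(m+1)) = 4^(m+1) * a^(2*(m+1)) := by
    rw [mul_pow, show (4:ℝ)^(m+1) = 2^(2*(m+1)) by
      rw [show (4:ℝ) = 2^2 by norm_num, ← pow_mul]]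
  have h24 : (2:ℝ)^(2*(m+1)) = 4^(m+1) := by
    rw [show (4:ℝ) = 2^2 by norm_num, ← pow_mul]
  rw [hpow, h24]
  field_simp
  ring
end

section
/- For every natural number k ≥ 0 and reals c, t, β with 0 < β < ct, ∫₀^β (c²t² − x²)^k dx = β·(2ct)^{2k}·(k!)²/(2k+1)! · Σ_{j=0}^{k} C(2j,j)·((c²t² − β²)/(2ct)²)^j. -/
lemma rec_int (a β : ℝ) (m : ℕ) :
    (2*(m:ℝ)+3) * (∫ x in (0:ℝ)..β, (a^2 - x^2)^(m+1)) =
      β*(a^2-β^2)^(m+1) + 2*((m:ℝ)+1)*a^2 * ∫ x in (0:ℝ)..β, (a^2-x^2)^m := by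
  have hderiv : ∀ x ∈ Set.uIcc (0:ℝ) β,
      HasDerivAt (fun x : ℝ => x * (a^2 - x^2)^(m+1))
        ((2*(m:ℝ)+3)*(a^2-x^2)^(m+1) - 2*((m:ℝ)+1)*a^2*(a^2-x^2)^m) x := by
    intro x _
    have h1 : HasDerivAt (fun x : ℝ => a^2 - x^2) (-(2*x)) x := by
      simpa using ((hasDerivAt_pow 2 x).const_sub (a^2))
    have h3 := (hasDerivAt_id x).mul (h1.pow (m+1))
    refine h3.congr_deriv ?_
    simp only [id_eq, Pi.pow_apply, Nat.add_sub_cancel]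
    push_cast
    ring
  have hint : IntervalIntegrable (fun x : ℝ =>
      (2*(m:ℝ)+3)*(a^2-x^2)^(m+1) - 2*((m:ℝ)+1)*a^2*(a^2-x^2)^m)
      MeasureTheory.volume 0 β := by
    apply Continuous.intervalIntegrable
    fun_prop
  have h := intervalIntegral.integral_eq_sub_of_hasDerivAt hderiv hint
  rw [intervalIntegral.integral_sub
      ((by fun_prop : Continuous fun x : ℝ => (2*(m:ℝ)+3)*(a^2-x^2)^(m+1)).intervalIntegrable _ _)
      ((by fun_prop : Continuous fun x : ℝ => 2*((m:ℝ)+1)*a^2*(a^2-x^2)^m).intervalIntegrable _ _),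
      intervalIntegral.integral_const_mul, intervalIntegral.integral_const_mul] at h
  simp at h
  linarith

lemma main_claim (a β : ℝ) (k : ℕ) :
    ∫ x in (0:ℝ)..β, (a^2 - x^2)^k =
      β * (Nat.factorial k : ℝ)^2 / (Nat.factorial (2*k+1) : ℝ) *
        ∑ j ∈ Finset.range (k+1),
          (Nat.choose (2*j) j : ℝ) * (a^2-β^2)^j * (4*a^2)^(k-j) := by
  induction k with
  | zero => simp
  | succ k ih =>
    have hrec := rec_int a β k
    rw [ih] at hrec
    have h23 : (2*(k:ℝ)+3) ≠ 0 := by positivity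
    have e1 : ∫ x in (0:ℝ)..β, (a^2 - x^2)^(k+1) =
        (β*(a^2-β^2)^(k+1) + 2*((k:ℝ)+1)*a^2 *
          (β * (Nat.factorial k : ℝ)^2 / (Nat.factorial (2*k+1) : ℝ) *
            ∑ j ∈ Finset.range (k+1),
              (Nat.choose (2*j) j : ℝ) * (a^2-β^2)^j * (4*a^2)^(k-j))) / (2*(k:ℝ)+3) := by
      rw [eq_div_iff h23]
      linarith
    rw [e1]
    conv_rhs => rw [Finset.sum_range_succ]
    have hsum : ∑ j ∈ Finset.range (k+1),
        (Nat.choose (2*j) j : ℝ) * (a^2-β^2)^j * (4*a^2)^(k+1-j)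
        = (4*a^2) * ∑ j ∈ Finset.range (k+1),
            (Nat.choose (2*j) j : ℝ) * (a^2-β^2)^j * (4*a^2)^(k-j) := by
      rw [Finset.mul_sum]
      apply Finset.sum_congr rfl
      intro j hj
      have hjk : j ≤ k := Nat.lt_succ_iff.mp (Finset.mem_range.mp hj)
      have : k + 1 - j = (k - j) + 1 := by omega
      rw [this, pow_succ]
      ring
    rw [hsum]
    have hf1 : (Nat.factorial (2*(k+1)+1) : ℝ)
        = (2*(k:ℝ)+3) * (2*(k:ℝ)+2) * (Nat.factorial (2*k+1) : ℝ) := by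
      have : 2*(k+1)+1 = (2*k+1) + 1 + 1 := by omega
      rw [this, Nat.factorial_succ, Nat.factorial_succ]
      push_cast
      ring
    have hf2 : (Nat.factorial (k+1) : ℝ) = ((k:ℝ)+1) * (Nat.factorial k : ℝ) := by
      rw [Nat.factorial_succ]; push_cast; ring
    have hf3 : ((Nat.choose (2*(k+1)) (k+1) : ℝ)) * (((k:ℝ)+1) * (Nat.factorial k : ℝ))^2
        = (2*(k:ℝ)+2) * (Nat.factorial (2*k+1) : ℝ) := by
      have h := Nat.choose_mul_factorial_mul_factorial (show k+1 ≤ 2*(k+1) by omega)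
      have h2 : 2*(k+1) - (k+1) = k+1 := by omega
      rw [h2] at h
      have h3 : (2*(k+1)).factorial = (2*k+2) * (2*k+1).factorial := by
        have : 2*(k+1) = (2*k+1)+1 := by omega
        rw [this, Nat.factorial_succ]
      rw [h3] at h
      have hc := congrArg (fun n : ℕ => (n : ℝ)) h
      push_cast at hc ⊢
      push_cast [hf2] at hc
      nlinarith [hc]
    have hne1 : (Nat.factorial (2*k+1) : ℝ) ≠ 0 := by positivity
    rw [hf1, hf2]
    have h22 : (2*(k:ℝ)+2) ≠ 0 := by positivity
    field_simp
    rw [Nat.sub_self, pow_zero, mul_one]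
    have hk1 : ((k:ℝ)+1) ≠ 0 := by positivity
    apply mul_left_cancel₀ hk1
    linear_combination (-(β*(a^2-β^2)^(k+1))) * hf3

theorem stmt_4 (k : ℕ) (c t β : ℝ) (hβ : 0 < β) (hβct : β < c * t) :
    ∫ x in (0:ℝ)..β, (c ^ 2 * t ^ 2 - x ^ 2) ^ k =
      β * (2 * c * t) ^ (2 * k) * (Nat.factorial k : ℝ) ^ 2 /
        (Nat.factorial (2 * k + 1) : ℝ) *
        ∑ j ∈ Finset.range (k + 1),
          (Nat.choose (2 * j) j : ℝ) *
            ((c ^ 2 * t ^ 2 - β ^ 2) / (2 * c * t) ^ 2) ^ j := by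
  have hct : (0:ℝ) < c * t := hβ.trans hβct
  have hne : (2*c*t) ≠ 0 := by
    have : (0:ℝ) < 2*c*t := by nlinarith
    exact ne_of_gt this
  have key := main_claim (c*t) β k
  rw [mul_pow] at key
  rw [key]
  have hsum : ∀ j ∈ Finset.range (k+1),
      (Nat.choose (2*j) j : ℝ) * (c^2*t^2-β^2)^j * (4*(c^2*t^2))^(k-j)
      = (2*c*t)^(2*k) *
        ((Nat.choose (2*j) j : ℝ) * ((c^2*t^2 - β^2) / (2*c*t)^2)^j) := by
    intro j hj
    have hjk : j ≤ k := Nat.lt_succ_iff.mp (Finset.mem_range.mp hj)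
    have hpow : (2*c*t)^(2*k) = ((2*c*t)^2)^j * ((2*c*t)^2)^(k-j) := by
      rw [← pow_add, ← pow_mul]
      congr 1
      omega
    rw [hpow, div_pow]
    have hD : ((2*c*t)^2)^j ≠ 0 := pow_ne_zero _ (pow_ne_zero _ hne)
    rw [mul_div_assoc', mul_div_assoc', eq_div_iff hD]
    ring
  calc β * (Nat.factorial k : ℝ)^2 / (Nat.factorial (2*k+1) : ℝ) *
        ∑ j ∈ Finset.range (k+1),
          (Nat.choose (2*j) j : ℝ) * (c^2*t^2-β^2)^j * (4*(c^2*t^2))^(k-j)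
      = β * (Nat.factorial k : ℝ)^2 / (Nat.factorial (2*k+1) : ℝ) *
        ∑ j ∈ Finset.range (k+1),
          (2*c*t)^(2*k) * ((Nat.choose (2*j) j : ℝ) *
            ((c^2*t^2 - β^2) / (2*c*t)^2)^j) := by
        congr 1
        refine Finset.sum_congr rfl fun j hj => ?_
        exact hsum j hj
    _ = β * (2 * c * t) ^ (2 * k) * (Nat.factorial k : ℝ) ^ 2 /
        (Nat.factorial (2 * k + 1) : ℝ) *
        ∑ j ∈ Finset.range (k + 1),
          (Nat.choose (2 * j) j : ℝ) *
            ((c ^ 2 * t ^ 2 - β ^ 2) / (2 * c * t) ^ 2) ^ j := by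
        rw [← Finset.mul_sum]
        ring
end

section
/- For every natural number k ≥ 0 and reals c, t, β with 0 < β < ct, the function F(β) = (β/(ct))·Σ_{j=0}^{k} C(2j,j)·((c²t² − β²)/(4c²t²))^j satisfies F(ct) = 1, F(0) = 0, and F is monotone increasing on [0, ct]. -/
private lemma tele_aux (k : ℕ) (u : ℝ) :
    ∑ j ∈ Finset.range (k + 1),
      (Nat.choose (2 * j) j : ℝ) * (u ^ j - j * (1/2 - 2*u) * u ^ (j-1))
      = (2 * k + 1) * (Nat.choose (2 * k) k : ℝ) * u ^ k := by
  induction k with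
  | zero => simp
  | succ n ih =>
    rw [Finset.sum_range_succ, ih]
    have hc : ((n : ℝ) + 1) * (Nat.choose (2 * (n + 1)) (n + 1) : ℝ)
        = 2 * (2 * n + 1) * (Nat.choose (2 * n) n : ℝ) := by
      have h := Nat.succ_mul_centralBinom_succ n
      simp only [Nat.centralBinom] at h
      exact_mod_cast h
    have hsub : (n + 1) - 1 = n := rfl
    rw [hsub]
    push_cast
    linear_combination (-(u ^ n) / 2) * hc

theorem stmt_5 (k : ℕ) (c t β : ℝ) (hβ : 0 < β) (hβct : β < c * t)
    (F : ℝ → ℝ)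
    (hF : ∀ x : ℝ, F x = x / (c * t) *
      ∑ j ∈ Finset.range (k + 1),
        (Nat.choose (2 * j) j : ℝ) *
          ((c ^ 2 * t ^ 2 - x ^ 2) / (4 * c ^ 2 * t ^ 2)) ^ j) :
    F (c * t) = 1 ∧ F 0 = 0 ∧ MonotoneOn F (Set.Icc 0 (c * t)) := by
  have ha : 0 < c * t := lt_trans hβ hβct
  have hane : c * t ≠ 0 := ne_of_gt ha
  have h4 : (4 : ℝ) * c ^ 2 * t ^ 2 ≠ 0 := by
    have : (0:ℝ) < 4 * c ^ 2 * t ^ 2 := by nlinarith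
    exact ne_of_gt this
  refine ⟨?_, ?_, ?_⟩
  · rw [hF]
    have hz : c ^ 2 * t ^ 2 - (c * t) ^ 2 = 0 := by ring
    rw [hz]
    rw [Finset.sum_eq_single 0]
    · simp [div_self hane]
    · intro j hj hjne
      simp [zero_pow hjne]
    · intro h; simp at h
  · rw [hF]; simp
  · -- Monotonicity
    have hFg : F = fun x => x / (c * t) *
      ∑ j ∈ Finset.range (k + 1),
        (Nat.choose (2 * j) j : ℝ) *
          ((c ^ 2 * t ^ 2 - x ^ 2) / (4 * c ^ 2 * t ^ 2)) ^ j := funext hF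
    set v : ℝ → ℝ := fun x => (c ^ 2 * t ^ 2 - x ^ 2) / (4 * c ^ 2 * t ^ 2) with hv
    have hvd : ∀ x : ℝ, HasDerivAt v (-(2*x) / (4 * c ^ 2 * t ^ 2)) x := by
      intro x
      have h1 : HasDerivAt (fun x : ℝ => c ^ 2 * t ^ 2 - x ^ 2) (-(2*x)) x := by
        simpa using (hasDerivAt_pow 2 x).const_sub (c ^ 2 * t ^ 2)
      exact h1.div_const _
    have hSd : ∀ x : ℝ, HasDerivAt
        (fun x => ∑ j ∈ Finset.range (k + 1), (Nat.choose (2 * j) j : ℝ) * (v x) ^ j)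
        (∑ j ∈ Finset.range (k + 1),
          (Nat.choose (2 * j) j : ℝ) * ((j : ℝ) * (v x) ^ (j - 1) * (-(2*x) / (4 * c ^ 2 * t ^ 2)))) x := by
      intro x
      apply HasDerivAt.fun_sum
      intro j hj
      exact ((hvd x).pow j).const_mul _
    have hgd : ∀ x : ℝ, HasDerivAt F
        (1 / (c * t) * ((2 * k + 1) * (Nat.choose (2 * k) k : ℝ) * (v x) ^ k)) x := by
      intro x
      have hid : HasDerivAt (fun x : ℝ => x / (c * t)) (1 / (c * t)) x := by
        simpa using (hasDerivAt_id x).div_const (c * t)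
      have hmul := hid.mul (hSd x)
      rw [hFg]
      refine HasDerivAt.congr_deriv hmul ?_
      symm
      -- show the derivative expressions are equal
      have hkey : x * (-(2*x) / (4 * c ^ 2 * t ^ 2)) = -(1/2 - 2 * v x) := by
        have hc0 : c ≠ 0 := by rintro rfl; simp at hane
        have ht0 : t ≠ 0 := by rintro rfl; simp at hane
        rw [hv]
        field_simp
        ring
      have hsum : (∑ j ∈ Finset.range (k + 1), (Nat.choose (2 * j) j : ℝ) * (v x) ^ j)
          + x * (∑ j ∈ Finset.range (k + 1),
            (Nat.choose (2 * j) j : ℝ) * ((j : ℝ) * (v x) ^ (j - 1) * (-(2*x) / (4 * c ^ 2 * t ^ 2))))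
          = (2 * k + 1) * (Nat.choose (2 * k) k : ℝ) * (v x) ^ k := by
        rw [← tele_aux k (v x), Finset.mul_sum, ← Finset.sum_add_distrib]
        apply Finset.sum_congr rfl
        intro j hj
        linear_combination ((Nat.choose (2 * j) j : ℝ) * (j : ℝ) * (v x) ^ (j - 1)) * hkey
      calc 1 / (c * t) * ((2 * k + 1) * (Nat.choose (2 * k) k : ℝ) * (v x) ^ k)
          = 1 / (c * t) * ((∑ j ∈ Finset.range (k + 1), (Nat.choose (2 * j) j : ℝ) * (v x) ^ j)
            + x * (∑ j ∈ Finset.range (k + 1),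
              (Nat.choose (2 * j) j : ℝ) * ((j : ℝ) * (v x) ^ (j - 1) * (-(2*x) / (4 * c ^ 2 * t ^ 2))))) := by
            rw [hsum]
        _ = _ := by ring
    apply monotoneOn_of_deriv_nonneg (convex_Icc _ _)
    · exact fun x _ => (hgd x).continuousAt.continuousWithinAt
    · intro x hx
      exact ((hgd x).differentiableAt).differentiableWithinAt
    · intro x hx
      rw [interior_Icc] at hx
      rw [(hgd x).deriv]
      have hvx : 0 ≤ v x := by
        rw [hv]
        apply div_nonneg
        · nlinarith [hx.1, hx.2]
        · nlinarith
      have h1 : (0:ℝ) ≤ 1 / (c * t) := by positivity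
      have h2 : (0:ℝ) ≤ (2 * k + 1) * (Nat.choose (2 * k) k : ℝ) * (v x) ^ k := by
        apply mul_nonneg
        · positivity
        · exact pow_nonneg hvx k
      exact mul_nonneg h1 h2
end

section
/- For every natural number k ≥ 0, every m ≥ 1, and reals c, t with ct > 0, (2(2k+1)!/(k!)²)·∫₀^{ct} β^m·(c²t²−β²)^k/(2ct)^{2k+1} dβ = ((2k+1)!·(ct)^m/(2^{2k+1}·k!))·Γ((m+1)/2)/Γ(k+1+(m+1)/2). -/
open intervalIntegral Real

lemma key_int (m : ℕ) (a : ℝ) (ha : 0 < a) : ∀ k : ℕ,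
    ∫ β in (0:ℝ)..a, β ^ m * (a ^ 2 - β ^ 2) ^ k =
      a ^ (m + 2 * k + 1) * (Nat.factorial k : ℝ) * Real.Gamma ((m + 1) / 2) /
        (2 * Real.Gamma (k + 1 + (m + 1) / 2)) := by
  have hΓ : ∀ x : ℝ, 0 < x → Real.Gamma x ≠ 0 := fun x hx => (Real.Gamma_pos_of_pos hx).ne'
  have hm2 : (0:ℝ) < (m + 1) / 2 := by positivity
  intro k
  induction k with
  | zero =>
    simp only [pow_zero, mul_one, Nat.factorial_zero, Nat.cast_one]
    rw [integral_pow]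
    rw [show ((0:ℕ):ℝ) + 1 + (m + 1) / 2 = (m + 1) / 2 + 1 by push_cast; ring,
      Real.Gamma_add_one hm2.ne']
    have : ((m:ℝ) + 1) ≠ 0 := by positivity
    rw [show m + 2 * 0 + 1 = m + 1 by ring]
    field_simp
    ring
  | succ k ih =>
    -- integration by parts identity
    set J : ℕ → ℝ := fun j => ∫ β in (0:ℝ)..a, β ^ m * (a ^ 2 - β ^ 2) ^ j with hJ
    have hderiv : ∀ β : ℝ, HasDerivAt (fun x : ℝ => x ^ (m + 1) * (a ^ 2 - x ^ 2) ^ (k + 1))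
        (((m:ℝ) + 2 * k + 3) * (β ^ m * (a ^ 2 - β ^ 2) ^ (k + 1)) -
          2 * (k + 1) * a ^ 2 * (β ^ m * (a ^ 2 - β ^ 2) ^ k)) β := by
      intro β
      have h1 : HasDerivAt (fun x : ℝ => x ^ (m + 1)) (((m:ℝ) + 1) * β ^ m) β := by
        simpa using hasDerivAt_pow (m + 1) β
      have h2 : HasDerivAt (fun x : ℝ => (a ^ 2 - x ^ 2) ^ (k + 1))
          (((k:ℝ) + 1) * (a ^ 2 - β ^ 2) ^ k * (-(2 * β))) β := by
        have hin : HasDerivAt (fun x : ℝ => a ^ 2 - x ^ 2) (-(2 * β)) β := by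
          simpa using (hasDerivAt_pow 2 β).const_sub (a ^ 2)
        have := (hasDerivAt_pow (k + 1) (a ^ 2 - β ^ 2)).comp β hin
        simpa [Function.comp_def] using this
      have : HasDerivAt (fun x : ℝ => x ^ (m + 1) * (a ^ 2 - x ^ 2) ^ (k + 1)) _ β := h1.mul h2
      convert this using 1
      ring
    have hcont : ∀ j : ℕ, IntervalIntegrable (fun β : ℝ => β ^ m * (a ^ 2 - β ^ 2) ^ j)
        MeasureTheory.volume 0 a := by
      intro j
      exact (Continuous.mul (continuous_pow m) ((continuous_const.sub (continuous_pow 2)).pow j)).intervalIntegrable 0 a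
    have hzero : (∫ β in (0:ℝ)..a,
        (((m:ℝ) + 2 * k + 3) * (β ^ m * (a ^ 2 - β ^ 2) ^ (k + 1)) -
          2 * (k + 1) * a ^ 2 * (β ^ m * (a ^ 2 - β ^ 2) ^ k))) = 0 := by
      rw [integral_eq_sub_of_hasDerivAt (fun β _ => hderiv β)]
      · have hm1 : m + 1 ≠ 0 := Nat.succ_ne_zero m
        simp [sub_self, zero_pow hm1]
      · exact (((hcont (k+1)).const_mul _).sub ((hcont k).const_mul _))
    rw [integral_sub ((hcont (k+1)).const_mul _) ((hcont k).const_mul _),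
      integral_const_mul, integral_const_mul] at hzero
    have hrec : ((m:ℝ) + 2 * k + 3) * J (k + 1) = 2 * (k + 1) * a ^ 2 * J k := by
      have := sub_eq_zero.mp hzero
      simpa [hJ] using this
    have hden : ((m:ℝ) + 2 * k + 3) ≠ 0 := by positivity
    have hJk1 : J (k + 1) = 2 * (k + 1) * a ^ 2 * J k / ((m:ℝ) + 2 * k + 3) := by
      field_simp
      linarith [hrec]
    show J (k + 1) = _
    rw [hJk1]
    simp only [hJ]
    rw [ih, Nat.factorial_succ]
    push_cast
    have hx : (0:ℝ) < (k:ℝ) + 1 + (m + 1) / 2 := by positivity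
    rw [show ((k:ℝ) + 1 + 1 + (m + 1) / 2) = ((k:ℝ) + 1 + (m + 1) / 2) + 1 by ring,
      Real.Gamma_add_one hx.ne']
    have hΓ2 := hΓ _ hx
    have ha' : a ≠ 0 := ha.ne'
    rw [show m + 2 * (k + 1) + 1 = (m + 2 * k + 1) + 2 by ring, pow_add]
    field_simp
    ring

theorem stmt_11 (k m : ℕ) (hm : 1 ≤ m) (c t : ℝ) (h : 0 < c * t) :
    2 * (Nat.factorial (2 * k + 1) : ℝ) / (Nat.factorial k : ℝ) ^ 2 *
      ∫ β in (0:ℝ)..(c * t),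
        β ^ m * (c ^ 2 * t ^ 2 - β ^ 2) ^ k / (2 * c * t) ^ (2 * k + 1) =
      (Nat.factorial (2 * k + 1) : ℝ) * (c * t) ^ m /
          (2 ^ (2 * k + 1) * (Nat.factorial k : ℝ)) *
        (Real.Gamma ((m + 1) / 2) / Real.Gamma (k + 1 + (m + 1) / 2)) := by
  have h2 : c ^ 2 * t ^ 2 = (c * t) ^ 2 := by ring
  have key := key_int m (c * t) h k
  have heq : (∫ β in (0:ℝ)..(c * t),
      β ^ m * (c ^ 2 * t ^ 2 - β ^ 2) ^ k / (2 * c * t) ^ (2 * k + 1)) =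
      (∫ β in (0:ℝ)..(c * t), β ^ m * ((c * t) ^ 2 - β ^ 2) ^ k) / (2 * c * t) ^ (2 * k + 1) := by
    rw [← integral_div]
    simp_rw [h2]
  rw [heq, key]
  have hΓ2 : Real.Gamma ((k:ℝ) + 1 + (m + 1) / 2) ≠ 0 :=
    (Real.Gamma_pos_of_pos (by positivity)).ne'
  have hfk : (Nat.factorial k : ℝ) ≠ 0 := Nat.cast_ne_zero.mpr (Nat.factorial_ne_zero k)
  have hct : c * t ≠ 0 := h.ne'
  rw [show (2 * c * t) ^ (2 * k + 1) = 2 ^ (2 * k + 1) * (c * t) ^ (2 * k + 1) by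
    rw [← mul_pow]; ring_nf]
  rw [show m + 2 * k + 1 = m + (2 * k + 1) by ring, pow_add]
  field_simp
end

section
/- For every natural number k ≥ 1 and reals c, t with ct > 0, (2(2k)!/(k!(k−1)!))·∫₀^{ct} β·(c²t²−β²)^{k−1}(ct−β)/(2ct)^{2k} dβ = ct·C(2k,k)/2^{2k} − ct/(2k+1). -/
lemma aux_hd1 (a : ℝ) (n : ℕ) (x : ℝ) :
    HasDerivAt (fun β : ℝ => β * (a^2 - β^2)^(n+1))
      ((a^2-x^2)^(n+1) - 2*(n+1)*x^2*(a^2-x^2)^n) x := by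
  have h1 : HasDerivAt (fun β : ℝ => a^2 - β^2) (-(2*x)) x := by
    simpa using ((hasDerivAt_pow 2 x).const_sub (a^2))
  have h2 := h1.fun_pow (n+1)
  have h3 := (hasDerivAt_id x).fun_mul h2
  simp only [id_eq] at h3
  refine h3.congr_deriv ?_
  push_cast
  ring

lemma aux_hd2 (a : ℝ) (n : ℕ) (x : ℝ) :
    HasDerivAt (fun β : ℝ => (a^2 - β^2)^(n+1) * (-1/(2*(n+1))))
      (x * (a^2-x^2)^n) x := by
  have h1 : HasDerivAt (fun β : ℝ => a^2 - β^2) (-(2*x)) x := by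
    simpa using ((hasDerivAt_pow 2 x).const_sub (a^2))
  have h2 := (h1.fun_pow (n+1)).mul_const (-1/(2*(n+1)))
  refine h2.congr_deriv ?_
  rw [Nat.add_sub_cancel]
  push_cast
  have : ((n:ℝ)+1) ≠ 0 := by positivity
  field_simp

lemma aux_cont (a : ℝ) (n : ℕ) : Continuous (fun β : ℝ => (a^2 - β^2)^n) := by
  fun_prop

lemma aux_rec (a : ℝ) (n : ℕ) :
    (2*(n:ℝ)+3) * ∫ β in (0:ℝ)..a, (a^2 - β^2)^(n+1)
      = 2*((n:ℝ)+1)*a^2 * ∫ β in (0:ℝ)..a, (a^2 - β^2)^n := by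
  have hint : ∀ m : ℕ, IntervalIntegrable (fun β : ℝ => (a^2 - β^2)^m) MeasureTheory.volume 0 a :=
    fun m => (aux_cont a m).intervalIntegrable _ _
  have hftc := intervalIntegral.integral_eq_sub_of_hasDerivAt
    (a := (0:ℝ)) (b := a)
    (f := fun β : ℝ => β * (a^2 - β^2)^(n+1))
    (f' := fun x : ℝ => (a^2-x^2)^(n+1) - 2*(n+1)*x^2*(a^2-x^2)^n)
    (fun x _ => aux_hd1 a n x)
    (by apply Continuous.intervalIntegrable; fun_prop)
  have hsimp : ∀ x : ℝ, (a^2-x^2)^(n+1) - 2*((n:ℝ)+1)*x^2*(a^2-x^2)^n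
      = (2*(n:ℝ)+3) * (a^2-x^2)^(n+1) - 2*((n:ℝ)+1)*a^2*(a^2-x^2)^n := by
    intro x
    have : (a^2-x^2)^(n+1) = (a^2-x^2) * (a^2-x^2)^n := by ring
    rw [this]
    ring
  simp only [hsimp] at hftc
  rw [intervalIntegral.integral_sub (((hint (n+1)).const_mul _)) ((hint n).const_mul _),
    intervalIntegral.integral_const_mul, intervalIntegral.integral_const_mul] at hftc
  have h0 : a * (a^2 - a^2)^(n+1) - 0 * (a^2 - 0^2)^(n+1) = 0 := by
    simp [zero_pow (Nat.succ_ne_zero n)]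
  rw [h0] at hftc
  linarith [hftc]

lemma aux_F (a : ℝ) (n : ℕ) :
    ∫ β in (0:ℝ)..a, (a^2-β^2)^n
      = a^(2*n+1) * 4^n * ((n.factorial : ℝ))^2 / (((2*n+1).factorial : ℝ)) := by
  induction n with
  | zero => simp
  | succ n ih =>
    have hrec := aux_rec a n
    rw [ih] at hrec
    have hne : (((2*n+1).factorial : ℝ)) ≠ 0 := by
      exact_mod_cast Nat.factorial_ne_zero _
    have hne3 : (2*(n:ℝ)+3) ≠ 0 := by positivity
    have h1 : (((2*(n+1)+1).factorial : ℝ)) = (2*(n:ℝ)+3) * (2*(n:ℝ)+2) * (((2*n+1).factorial : ℝ)) := by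
      have e : 2*(n+1)+1 = (2*n+1)+1+1 := by ring
      rw [e, Nat.factorial_succ, Nat.factorial_succ]; push_cast; ring
    have h2 : (((n+1).factorial : ℝ)) = ((n:ℝ)+1) * (n.factorial : ℝ) := by
      rw [Nat.factorial_succ]; push_cast; ring
    have key : ∫ β in (0:ℝ)..a, (a^2-β^2)^(n+1)
        = 2*((n:ℝ)+1)*a^2 * (a^(2*n+1)*4^n*((n.factorial:ℝ))^2/(((2*n+1).factorial : ℝ))) / (2*(n:ℝ)+3) := by
      field_simp at hrec ⊢
      linarith
    rw [key, h1, h2]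
    have e2 : a^(2*(n+1)+1) = a^(2*n+1) * a^2 := by ring
    rw [e2]
    field_simp
    ring

lemma aux_G (a : ℝ) (n : ℕ) :
    ∫ β in (0:ℝ)..a, β * (a^2-β^2)^n = a^(2*n+2) / (2*((n:ℝ)+1)) := by
  have hftc := intervalIntegral.integral_eq_sub_of_hasDerivAt
    (a := (0:ℝ)) (b := a)
    (f := fun β : ℝ => (a^2 - β^2)^(n+1) * (-1/(2*((n:ℝ)+1))))
    (f' := fun x : ℝ => x * (a^2-x^2)^n)
    (fun x _ => aux_hd2 a n x)
    (by apply Continuous.intervalIntegrable; fun_prop)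
  rw [hftc]
  have hne : (2*((n:ℝ)+1)) ≠ 0 := by positivity
  have e1 : ((a:ℝ)^2 - a^2)^(n+1) = 0 := by
    rw [sub_self, zero_pow (Nat.succ_ne_zero n)]
  rw [e1]
  have e2 : ((a:ℝ)^2 - 0^2)^(n+1) = a^(2*n+2) := by ring
  rw [e2]
  field_simp
  ring

theorem stmt_13 (k : ℕ) (hk : 1 ≤ k) (c t : ℝ) (h : 0 < c * t) :
    2 * (Nat.factorial (2 * k) : ℝ) /
        ((Nat.factorial k : ℝ) * (Nat.factorial (k - 1) : ℝ)) *
      ∫ β in (0:ℝ)..(c * t),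
        β * (c ^ 2 * t ^ 2 - β ^ 2) ^ (k - 1) * (c * t - β) / (2 * c * t) ^ (2 * k) =
      c * t * (Nat.choose (2 * k) k : ℝ) / 2 ^ (2 * k) - c * t / (2 * k + 1) := by
  obtain ⟨m, rfl⟩ : ∃ m, k = m + 1 := ⟨k - 1, by omega⟩
  set A : ℝ := c * t with hA
  have hA0 : A ≠ 0 := ne_of_gt h
  have hint : ∀ n : ℕ, IntervalIntegrable (fun β : ℝ => (A^2 - β^2)^n) MeasureTheory.volume 0 A :=
    fun n => (aux_cont A n).intervalIntegrable _ _
  have hintb : IntervalIntegrable (fun β : ℝ => β * (A^2 - β^2)^m) MeasureTheory.volume 0 A := by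
    apply Continuous.intervalIntegrable; fun_prop
  have heq : ∀ β : ℝ, β * (c ^ 2 * t ^ 2 - β ^ 2) ^ (m + 1 - 1) * (c * t - β) / (2 * c * t) ^ (2 * (m+1))
      = (A * (β * (A^2 - β^2)^m) - A^2 * (A^2 - β^2)^m + (A^2 - β^2)^(m+1)) * ((2*A)^(2*(m+1)))⁻¹ := by
    intro β
    have e : c ^ 2 * t ^ 2 = A^2 := by rw [hA]; ring
    rw [e]
    have e2 : (2 * c * t) = 2 * A := by rw [hA]; ring
    rw [e2]
    simp only [Nat.add_sub_cancel]
    rw [div_eq_mul_inv]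
    congr 1
    ring
  rw [← hA] at heq
  simp only [heq]
  rw [intervalIntegral.integral_mul_const,
    intervalIntegral.integral_add ((hintb.const_mul _).sub ((hint m).const_mul _)) (hint (m+1)),
    intervalIntegral.integral_sub (hintb.const_mul _) ((hint m).const_mul _),
    intervalIntegral.integral_const_mul, intervalIntegral.integral_const_mul,
    aux_G, aux_F, aux_F]
  -- now pure algebra
  have hm : (((m).factorial : ℝ)) ≠ 0 := by exact_mod_cast Nat.factorial_ne_zero _
  have h2m1 : (((2*m+1).factorial : ℝ)) ≠ 0 := by exact_mod_cast Nat.factorial_ne_zero _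
  have hm1 : (((m+1).factorial : ℝ)) = ((m:ℝ)+1) * ((m).factorial : ℝ) := by
    rw [Nat.factorial_succ]; push_cast; ring
  have hf1 : (((2*(m+1)).factorial : ℝ)) = (2*(m:ℝ)+2) * (((2*m+1).factorial : ℝ)) := by
    have e : 2*(m+1) = (2*m+1)+1 := by ring
    rw [e, Nat.factorial_succ]; push_cast; ring
  have hf2 : (((2*(m+1)+1).factorial : ℝ)) = (2*(m:ℝ)+3) * (2*(m:ℝ)+2) * (((2*m+1).factorial : ℝ)) := by
    have e : 2*(m+1)+1 = (2*m+1)+1+1 := by ring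
    rw [e, Nat.factorial_succ, Nat.factorial_succ]; push_cast; ring
  have hch : ((Nat.choose (2*(m+1)) (m+1) : ℝ)) * (((m+1).factorial : ℝ) * ((m+1).factorial : ℝ))
      = ((2*(m+1)).factorial : ℝ) := by
    have h0 := Nat.choose_mul_factorial_mul_factorial (show m+1 ≤ 2*(m+1) by omega)
    have e : 2*(m+1) - (m+1) = m+1 := by omega
    rw [e] at h0
    have h1 : ((((2*(m+1)).choose (m+1) * (m+1).factorial * (m+1).factorial : ℕ)) : ℝ)
        = (((2*(m+1)).factorial : ℕ) : ℝ) := by exact_mod_cast congrArg (Nat.cast : ℕ → ℝ) h0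
    rw [← h1]; push_cast; ring
  have hch' : ((Nat.choose (2*(m+1)) (m+1) : ℝ))
      = ((2*(m+1)).factorial : ℝ) / (((m+1).factorial : ℝ) * ((m+1).factorial : ℝ)) := by
    rw [← hch]
    field_simp
  rw [hch', hf1, hf2, hm1]
  have h4 : (4:ℝ)^m = 2^(2*m) := by rw [pow_mul]; norm_num
  have h4' : (4:ℝ)^(m+1) = 2^(2*m) * 4 := by rw [pow_succ, h4]
  have em : 2*(m+1) = 2*m+2 := by ring
  have hp1 : (2*A)^(2*(m+1)) = 2^(2*m) * 4 * A^(2*m) * A^2 := by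
    rw [mul_pow, em, pow_add, pow_add]; norm_num; ring
  have hp2 : A^(2*m+2) = A^(2*m) * A^2 := by ring
  have hp3 : A^(2*m+1) = A^(2*m) * A := by ring
  have hp4 : A^(2*(m+1)+1) = A^(2*m) * A^2 * A := by ring
  have hp5 : (2:ℝ)^(2*(m+1)) = 2^(2*m) * 4 := by rw [em, pow_add]; norm_num
  rw [h4, h4', hp1, hp2, hp3, hp4, hp5]
  have hAm : (A:ℝ)^(2*m) ≠ 0 := pow_ne_zero _ hA0
  have h2m : ((2:ℝ))^(2*m) ≠ 0 := by positivity
  have hm2 : ((m:ℝ)+1) ≠ 0 := by positivity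
  have h23 : (2*(m:ℝ)+3) ≠ 0 := by positivity
  have h22 : (2*(m:ℝ)+2) ≠ 0 := by positivity
  have hcast : ((2*(m+1) : ℕ) : ℝ) + 1 = 2*(m:ℝ)+3 := by push_cast; ring
  push_cast
  field_simp
  ring
end

section
/- For all reals λ > 0, c > 0, t > 0 and 0 < β < ct, the identity Σ_{k=0}^∞ 2·((2k+1)!/(k!)²)·((c²t²−β²)^k/(2ct)^{2k+1})·e^{−λt}(λt)^{2k+1}/(2k+1)! = (λ e^{−λt}/c)·I₀((λ/c)√(c²t²−β²)) holds, where I₀(x) = Σ_{j=0}^∞ (x/2)^{2j}/(j!)² is the modified Bessel function of order 0. -/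
noncomputable def besselI0 (x : ℝ) : ℝ :=
  ∑' j : ℕ, (x / 2) ^ (2 * j) / (Nat.factorial j : ℝ) ^ 2

theorem stmt_17 (lam c t β : ℝ) (hlam : 0 < lam) (hc : 0 < c) (ht : 0 < t)
    (hβ : 0 < β) (hβct : β < c * t) :
    ∑' k : ℕ,
        2 * ((Nat.factorial (2 * k + 1) : ℝ) / (Nat.factorial k : ℝ) ^ 2) *
          ((c ^ 2 * t ^ 2 - β ^ 2) ^ k / (2 * c * t) ^ (2 * k + 1)) *
          (Real.exp (-(lam * t)) * (lam * t) ^ (2 * k + 1) /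
            (Nat.factorial (2 * k + 1) : ℝ)) =
      lam * Real.exp (-(lam * t)) / c *
        besselI0 (lam / c * Real.sqrt (c ^ 2 * t ^ 2 - β ^ 2)) := by
  have hx : 0 ≤ c ^ 2 * t ^ 2 - β ^ 2 := by nlinarith
  rw [besselI0, ← tsum_mul_left]
  apply tsum_congr
  intro k
  have hs : (lam / c * Real.sqrt (c ^ 2 * t ^ 2 - β ^ 2) / 2) ^ (2 * k)
      = (lam / (2 * c)) ^ (2 * k) * (c ^ 2 * t ^ 2 - β ^ 2) ^ k := by
    rw [div_pow, mul_pow, pow_mul (Real.sqrt _), Real.sq_sqrt hx]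
    simp only [div_pow, mul_pow]
    ring
  rw [hs]
  have hf1 : ((2 * k + 1).factorial : ℝ) ≠ 0 :=
    Nat.cast_ne_zero.2 (Nat.factorial_ne_zero _)
  have hf2 : ((k).factorial : ℝ) ≠ 0 :=
    Nat.cast_ne_zero.2 (Nat.factorial_ne_zero _)
  have hc' : c ≠ 0 := hc.ne'
  have ht' : t ≠ 0 := ht.ne'
  rw [div_pow]
  field_simp
  ring
end
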